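/- Let S ⊆ ℝ^n be compact. Then there exists μ̄ > 0 such that for every x ∈ S and every μ ≥ μ̄, the minimizer y = p_μ(x) satisfies g(F(y)) ≤ h(x,y) + (μ/2)‖y − x‖². -/

import Mathlib

set_option maxHeartbeats 1000000

open Metric Set

/-- A convex function that is Lipschitz on `ball 0 2` has a global affine lower bound. -/
lemma aux_convex_lower {m : ℕ} (g : EuclideanSpace ℝ (Fin m) → ℝ)
    (hg : ConvexOn ℝ Set.univ g) (L : NNReal)
    (hL : LipschitzOnWith L g (Metric.ball 0 2)) (v : EuclideanSpace ℝ (Fin m)) :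
    g 0 - (L : ℝ) * ‖v‖ ≤ g v := by
  have h0 : (0 : EuclideanSpace ℝ (Fin m)) ∈ Metric.ball (0 : EuclideanSpace ℝ (Fin m)) 2 := by
    simp
  rcases le_or_gt ‖v‖ 1 with h | h
  · have hv : v ∈ Metric.ball (0 : EuclideanSpace ℝ (Fin m)) 2 := by
      simp only [Metric.mem_ball, dist_zero_right]; linarith
    have hd := hL.dist_le_mul 0 h0 v hv
    rw [dist_zero_left] at hd
    have : g 0 - g v ≤ dist (g 0) (g v) := by
      rw [Real.dist_eq]; exact le_abs_self _
    linarith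
  · set c := ‖v‖ with hc
    have hcpos : 0 < c := by linarith
    set u := c⁻¹ • v with hu
    have hun : ‖u‖ = 1 := by
      rw [hu, norm_smul, norm_inv, Real.norm_eq_abs, abs_of_pos hcpos, ← hc]
      field_simp
    have huball : u ∈ Metric.ball (0 : EuclideanSpace ℝ (Fin m)) 2 := by
      simp only [Metric.mem_ball, dist_zero_right, hun]; norm_num
    have hinv1 : c⁻¹ ≤ 1 := by
      rw [inv_le_one_iff₀]; right; linarith
    have hcomb := hg.2 (Set.mem_univ v) (Set.mem_univ (0 : EuclideanSpace ℝ (Fin m)))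
      (show (0:ℝ) ≤ c⁻¹ by positivity) (show (0:ℝ) ≤ 1 - c⁻¹ by linarith)
      (show c⁻¹ + (1 - c⁻¹) = 1 by ring)
    rw [smul_zero, add_zero, ← hu] at hcomb
    have hd := hL.dist_le_mul 0 h0 u huball
    rw [dist_zero_left, hun, mul_one] at hd
    have h1 : g 0 - g u ≤ (L : ℝ) := by
      have : g 0 - g u ≤ dist (g 0) (g u) := by
        rw [Real.dist_eq]; exact le_abs_self _
      linarith
    have hci : c * c⁻¹ = 1 := mul_inv_cancel₀ hcpos.ne'
    have hcomb' : g u ≤ c⁻¹ * g v + (1 - c⁻¹) * g 0 := by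
      simpa [smul_eq_mul] using hcomb
    have h3 : g 0 - (L : ℝ) ≤ c⁻¹ * g v + (1 - c⁻¹) * g 0 :=
      le_trans (by linarith) hcomb'
    have h4 := mul_le_mul_of_nonneg_left h3 hcpos.le
    have h5 : c * (c⁻¹ * g v + (1 - c⁻¹) * g 0) = g v + (c - 1) * g 0 := by
      calc c * (c⁻¹ * g v + (1 - c⁻¹) * g 0)
          = (c * c⁻¹) * g v + (c - c * c⁻¹) * g 0 := by ring
        _ = g v + (c - 1) * g 0 := by rw [hci]; ring
    rw [h5] at h4
    nlinarith [h4]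

/-- Arithmetic helper: quadratic growth bound. -/
lemma aux_t_bound (μ A B t Md : ℝ) (hA : 0 ≤ A) (hB : 0 ≤ B) (ht : 0 ≤ t) (hμ : 1 ≤ μ)
    (hmain : μ / 2 * t ^ 2 ≤ A + B * t + μ / 2 * Md ^ 2) :
    t ≤ 2 * B + Real.sqrt (2 * A + Md ^ 2) := by
  have hc₂nn : 0 ≤ 2 * A + Md ^ 2 := by positivity
  have hs2 : 0 ≤ Real.sqrt (2 * A + Md ^ 2) := Real.sqrt_nonneg _
  have hs1 : Real.sqrt (2 * A + Md ^ 2) ^ 2 = 2 * A + Md ^ 2 := Real.sq_sqrt hc₂nn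
  have ht2 : t ^ 2 ≤ 2 * A + Md ^ 2 + 2 * B * t := by
    rcases le_or_gt (t ^ 2) (Md ^ 2) with hc | hc
    · nlinarith [mul_nonneg hB ht]
    · nlinarith [mul_nonneg (sub_nonneg.2 hμ) (le_of_lt (sub_pos.2 hc))]
  by_contra hcon
  push_neg at hcon
  set s := Real.sqrt (2 * A + Md ^ 2) with hs
  have h1 : s < t - 2 * B := by linarith
  have h2 : s * s < t * (t - 2 * B) := mul_lt_mul'' (by linarith) h1 hs2 hs2
  nlinarith [h2, hs1, ht2]

theorem stmt_7 {n m : ℕ}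
    (F : EuclideanSpace ℝ (Fin n) → EuclideanSpace ℝ (Fin m))
    (g : EuclideanSpace ℝ (Fin m) → ℝ)
    (D : Set (EuclideanSpace ℝ (Fin n)))
    (hF : ContDiff ℝ 2 F)
    (hg : ConvexOn ℝ Set.univ g) (hgc : Continuous g)
    (hDne : D.Nonempty) (hDcl : IsClosed D) (hDcv : Convex ℝ D)
    (p : ℝ → EuclideanSpace ℝ (Fin n) → EuclideanSpace ℝ (Fin n))
    (hp : ∀ μ, 0 < μ → ∀ x, p μ x ∈ D ∧ ∀ z ∈ D,
      g (F x + fderiv ℝ F x (p μ x - x)) + μ / 2 * ‖p μ x - x‖ ^ 2 ≤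
      g (F x + fderiv ℝ F x (z - x)) + μ / 2 * ‖z - x‖ ^ 2)
    (S : Set (EuclideanSpace ℝ (Fin n))) (hS : IsCompact S) :
    ∃ μbar > (0 : ℝ), ∀ x ∈ S, ∀ μ, μbar ≤ μ →
      g (F (p μ x)) ≤ g (F x + fderiv ℝ F x (p μ x - x)) + μ / 2 * ‖p μ x - x‖ ^ 2 := by
  classical
  obtain ⟨d₀, hd₀⟩ := hDne
  -- S is contained in a closed ball of radius ρ₀ > 0
  obtain ⟨ρ₀, hρ₀pos, hSball⟩ := hS.isBounded.subset_closedBall_lt 0 0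
  have hFdiff : Differentiable ℝ F := hF.differentiable (by norm_num)
  have hJcont : Continuous (fderiv ℝ F) := hF.continuous_fderiv (by norm_num)
  -- bounds over closedBall 0 ρ₀
  obtain ⟨MF, hMF⟩ := (isCompact_closedBall (0 : EuclideanSpace ℝ (Fin n)) ρ₀)
    |>.exists_bound_of_continuousOn hF.continuous.continuousOn
  obtain ⟨MJ, hMJ⟩ := (isCompact_closedBall (0 : EuclideanSpace ℝ (Fin n)) ρ₀)
    |>.exists_bound_of_continuousOn hJcont.continuousOn
  have hqcont : Continuous fun x => g (F x + fderiv ℝ F x (d₀ - x)) :=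
    hgc.comp (hF.continuous.add (hJcont.clm_apply (continuous_const.sub continuous_id)))
  obtain ⟨MG, hMG⟩ := (isCompact_closedBall (0 : EuclideanSpace ℝ (Fin n)) ρ₀)
    |>.exists_bound_of_continuousOn hqcont.continuousOn
  -- global lower bound for g
  obtain ⟨M₂, hM₂⟩ := (isCompact_closedBall (0 : EuclideanSpace ℝ (Fin m)) 3)
    |>.exists_bound_of_continuousOn hgc.continuousOn
  have hgball : ConvexOn ℝ (Metric.ball (0 : EuclideanSpace ℝ (Fin m)) 3) g :=
    hg.subset (Set.subset_univ _) (convex_ball _ _)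
  have hLlem := hgball.lipschitzOnWith_of_abs_le (ε := 1) (M := |M₂|) one_pos
    (fun a ha => by
      have : ‖a‖ ≤ 3 := le_of_lt (by simpa [dist_zero_right] using ha)
      exact le_trans (by
        have := hM₂ a (by simpa [dist_zero_right] using this)
        simpa [Real.norm_eq_abs] using this) (le_abs_self _))
  have h31 : (3 : ℝ) - 1 = 2 := by norm_num
  rw [h31] at hLlem
  set L : NNReal := (2 * |M₂| / 1).toNNReal with hLdef
  have hglower : ∀ v, g 0 - (L : ℝ) * ‖v‖ ≤ g v :=
    aux_convex_lower g hg L hLlem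
  -- constants for stage-1 bound on ‖p μ x - x‖
  set A : ℝ := |MG| + (L : ℝ) * |MF| + |g 0| with hA
  set B : ℝ := (L : ℝ) * |MJ| with hB
  set Md : ℝ := ‖d₀‖ + ρ₀ with hMd
  set c₁ : ℝ := 2 * B with hc₁
  set c₂ : ℝ := 2 * A + Md ^ 2 with hc₂
  have hAnn : 0 ≤ A := by positivity
  have hBnn : 0 ≤ B := by positivity
  have hc₂nn : 0 ≤ c₂ := by positivity
  set R : ℝ := c₁ + Real.sqrt c₂ with hR
  have hRnn : 0 ≤ R := by positivity
  -- stage-1: bound on ‖p μ x - x‖ for μ ≥ 1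
  have hstage1 : ∀ x ∈ S, ∀ μ : ℝ, 1 ≤ μ → ‖p μ x - x‖ ≤ R := by
    intro x hx μ hμ
    have hμpos : 0 < μ := by linarith
    obtain ⟨hpD, hpopt⟩ := hp μ hμpos x
    set y := p μ x with hy
    set t := ‖y - x‖ with ht
    have htnn : 0 ≤ t := norm_nonneg _
    have hxball : x ∈ closedBall (0 : EuclideanSpace ℝ (Fin n)) ρ₀ := hSball hx
    have hkey := hpopt d₀ hd₀
    have hFx : ‖F x‖ ≤ |MF| := le_trans (hMF x hxball) (le_abs_self _)
    have hJx : ‖fderiv ℝ F x‖ ≤ |MJ| := le_trans (hMJ x hxball) (le_abs_self _)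
    have hlow : g 0 - (L : ℝ) * (|MF| + |MJ| * t) ≤ g (F x + fderiv ℝ F x (y - x)) := by
      refine le_trans ?_ (hglower _)
      have hnorm : ‖F x + fderiv ℝ F x (y - x)‖ ≤ |MF| + |MJ| * t := by
        refine le_trans (norm_add_le _ _) (add_le_add hFx ?_)
        exact le_trans ((fderiv ℝ F x).le_opNorm _)
          (mul_le_mul hJx le_rfl (norm_nonneg _) (abs_nonneg _))
      have hLnn : (0:ℝ) ≤ (L : ℝ) := L.coe_nonneg
      have := mul_le_mul_of_nonneg_left hnorm hLnn
      linarith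
    have hup : g (F x + fderiv ℝ F x (d₀ - x)) ≤ |MG| := by
      have h := hMG x hxball
      rw [Real.norm_eq_abs] at h
      exact le_trans (le_abs_self _) (le_trans h (le_abs_self _))
    have hdist : ‖d₀ - x‖ ≤ Md := by
      refine le_trans (norm_sub_le _ _) ?_
      rw [hMd]
      gcongr
      simpa [dist_zero_right] using hxball
    have hdist2 : ‖d₀ - x‖ ^ 2 ≤ Md ^ 2 := pow_le_pow_left₀ (norm_nonneg _) hdist 2
    -- μ/2 * t^2 ≤ A + B * t + μ/2 * Md^2
    have hmain : μ / 2 * t ^ 2 ≤ A + B * t + μ / 2 * Md ^ 2 := by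
      have h1 : g 0 - (L : ℝ) * (|MF| + |MJ| * t) + μ / 2 * t ^ 2 ≤
          |MG| + μ / 2 * Md ^ 2 := by
        calc g 0 - (L : ℝ) * (|MF| + |MJ| * t) + μ / 2 * t ^ 2
            ≤ g (F x + fderiv ℝ F x (y - x)) + μ / 2 * t ^ 2 := by linarith
          _ ≤ g (F x + fderiv ℝ F x (d₀ - x)) + μ / 2 * ‖d₀ - x‖ ^ 2 := hkey
          _ ≤ |MG| + μ / 2 * Md ^ 2 := by
              have h2 : μ / 2 * ‖d₀ - x‖ ^ 2 ≤ μ / 2 * Md ^ 2 :=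
                mul_le_mul_of_nonneg_left hdist2 (by positivity)
              linarith
      have hgabs : -(|g 0|) ≤ g 0 := neg_abs_le _
      have hexp : (L : ℝ) * (|MF| + |MJ| * t) = (L : ℝ) * |MF| + (L : ℝ) * |MJ| * t := by ring
      rw [hA, hB]
      linarith [h1, hexp.le]
    -- conclude t ≤ R via the arithmetic helper
    have := aux_t_bound μ A B t Md hAnn hBnn htnn hμ hmain
    rw [hR, hc₁, hc₂]
    exact this
  -- stage-2: constants over closedBall 0 (ρ₀ + R)
  have hJ1 : ContDiff ℝ 1 (fderiv ℝ F) := hF.fderiv_right (by norm_num)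
  have hJJcont : Continuous (fderiv ℝ (fderiv ℝ F)) := hJ1.continuous_fderiv (by norm_num)
  obtain ⟨C0, hC0⟩ := (isCompact_closedBall (0 : EuclideanSpace ℝ (Fin n)) (ρ₀ + R))
    |>.exists_bound_of_continuousOn (f := fderiv ℝ (fderiv ℝ F)) hJJcont.continuousOn
  set C : ℝ := |C0| with hCdef
  have hCnn : 0 ≤ C := abs_nonneg _
  obtain ⟨MF2, hMF2⟩ := (isCompact_closedBall (0 : EuclideanSpace ℝ (Fin n)) (ρ₀ + R))
    |>.exists_bound_of_continuousOn hF.continuous.continuousOn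
  set ρ₁ : ℝ := |MF2| + |MF| + |MJ| * R + 3 with hρ₁
  have hρ₁pos : 0 < ρ₁ := by positivity
  obtain ⟨M₃, hM₃⟩ := (isCompact_closedBall (0 : EuclideanSpace ℝ (Fin m)) (ρ₁ + 1))
    |>.exists_bound_of_continuousOn hgc.continuousOn
  have hgball2 : ConvexOn ℝ (Metric.ball (0 : EuclideanSpace ℝ (Fin m)) (ρ₁ + 1)) g :=
    hg.subset (Set.subset_univ _) (convex_ball _ _)
  have hL2lem := hgball2.lipschitzOnWith_of_abs_le (ε := 1) (M := |M₃|) one_pos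
    (fun a ha => by
      have h1 : ‖a‖ ≤ ρ₁ + 1 := le_of_lt (by simpa [dist_zero_right] using ha)
      exact le_trans (by
        have := hM₃ a (by simpa [dist_zero_right] using h1)
        simpa [Real.norm_eq_abs] using this) (le_abs_self _))
  have hρε : ρ₁ + 1 - 1 = ρ₁ := by ring
  rw [hρε] at hL2lem
  set L₂ : NNReal := (2 * |M₃| / 1).toNNReal with hL₂def
  -- the final μbar
  refine ⟨max 1 (2 * (L₂ : ℝ) * C), lt_of_lt_of_le one_pos (le_max_left _ _), ?_⟩
  intro x hx μ hμ
  have hμ1 : 1 ≤ μ := le_trans (le_max_left _ _) hμ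
  have hμC : 2 * (L₂ : ℝ) * C ≤ μ := le_trans (le_max_right _ _) hμ
  have hμpos : 0 < μ := by linarith
  obtain ⟨hpD, hpopt⟩ := hp μ hμpos x
  set y := p μ x with hy
  set t := ‖y - x‖ with ht
  have htnn : 0 ≤ t := norm_nonneg _
  have htR : t ≤ R := hstage1 x hx μ hμ1
  have hxball : x ∈ closedBall (0 : EuclideanSpace ℝ (Fin n)) ρ₀ := hSball hx
  have hxnorm : ‖x‖ ≤ ρ₀ := by simpa [dist_zero_right] using hxball
  -- the segment from x to y lies in closedBall 0 (ρ₀ + R)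
  have hsub : closedBall x t ⊆ closedBall (0 : EuclideanSpace ℝ (Fin n)) (ρ₀ + R) := by
    intro z hz
    simp only [mem_closedBall, dist_zero_right]
    have : ‖z - x‖ ≤ t := by simpa [dist_eq_norm] using hz
    calc ‖z‖ = ‖z - x + x‖ := by rw [sub_add_cancel]
      _ ≤ ‖z - x‖ + ‖x‖ := norm_add_le _ _
      _ ≤ ρ₀ + R := by linarith
  have hxmem : x ∈ closedBall x t := mem_closedBall_self htnn
  have hymem : y ∈ closedBall x t := by simp [mem_closedBall, dist_eq_norm, ht]
  -- Lipschitz bound on the derivative within closedBall x t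
  have hJz : ∀ z ∈ closedBall x t, ‖fderiv ℝ F z - fderiv ℝ F x‖ ≤ C * t := by
    intro z hz
    have hzB := hsub hz
    have hxB := hsub hxmem
    have hlip := (convex_closedBall (0 : EuclideanSpace ℝ (Fin n)) (ρ₀ + R))
      |>.norm_image_sub_le_of_norm_fderiv_le
        (f := fderiv ℝ F) (C := C)
        (fun w _ => (hJ1.differentiable (by norm_num)) w)
        (fun w hw => le_trans (hC0 w hw) (le_abs_self _)) hxB hzB
    refine le_trans hlip ?_
    have : ‖z - x‖ ≤ t := by simpa [dist_eq_norm] using hz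
    gcongr
  -- Taylor estimate: ‖F y - (F x + J x (y - x))‖ ≤ C * t * t
  have htaylor : ‖F y - (F x + fderiv ℝ F x (y - x))‖ ≤ C * t * t := by
    have hmv := (convex_closedBall x t).norm_image_sub_le_of_norm_hasFDerivWithin_le
      (f := fun z => F z - fderiv ℝ F x z)
      (f' := fun z => fderiv ℝ F z - fderiv ℝ F x) (C := C * t)
      (fun z _ => ((hFdiff z).hasFDerivAt.sub (fderiv ℝ F x).hasFDerivAt).hasFDerivWithinAt)
      (fun z hz => hJz z hz) hxmem hymem
    have heq : (F y - fderiv ℝ F x y) - (F x - fderiv ℝ F x x)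
        = F y - (F x + fderiv ℝ F x (y - x)) := by
      rw [map_sub]; abel
    rw [heq] at hmv
    calc ‖F y - (F x + fderiv ℝ F x (y - x))‖ ≤ C * t * ‖y - x‖ := hmv
      _ = C * t * t := by rw [← ht]
  -- both F y and F x + J x (y - x) lie in ball 0 ρ₁
  set a := F x + fderiv ℝ F x (y - x) with ha
  set b := F y with hb
  have hFx : ‖F x‖ ≤ |MF| := le_trans (hMF x hxball) (le_abs_self _)
  have hJx : ‖fderiv ℝ F x‖ ≤ |MJ| := le_trans (hMJ x hxball) (le_abs_self _)
  have hanorm : ‖a‖ ≤ |MF| + |MJ| * R := by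
    rw [ha]
    refine le_trans (norm_add_le _ _) ?_
    gcongr
    refine le_trans ((fderiv ℝ F x).le_opNorm _) ?_
    calc ‖fderiv ℝ F x‖ * ‖y - x‖ ≤ |MJ| * t := by gcongr
      _ ≤ |MJ| * R := mul_le_mul_of_nonneg_left htR (abs_nonneg _)
  have hbnorm : ‖b‖ ≤ |MF2| := by
    rw [hb]
    exact le_trans (hMF2 y (hsub hymem)) (le_abs_self _)
  have haball : a ∈ Metric.ball (0 : EuclideanSpace ℝ (Fin m)) ρ₁ := by
    simp only [Metric.mem_ball, dist_zero_right]
    have : (0:ℝ) ≤ |MF2| := abs_nonneg _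
    rw [hρ₁]; linarith
  have hbball : b ∈ Metric.ball (0 : EuclideanSpace ℝ (Fin m)) ρ₁ := by
    simp only [Metric.mem_ball, dist_zero_right]
    have h1 : (0:ℝ) ≤ |MF| := abs_nonneg _
    have h2 : (0:ℝ) ≤ |MJ| * R := by positivity
    rw [hρ₁]; linarith
  -- Lipschitz estimate for g
  have hgdiff : g b - g a ≤ (L₂ : ℝ) * ‖b - a‖ := by
    have hd := hL2lem.dist_le_mul b hbball a haball
    rw [dist_eq_norm] at hd
    calc g b - g a ≤ |g b - g a| := le_abs_self _
      _ = dist (g b) (g a) := (Real.dist_eq _ _).symm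
      _ ≤ (L₂ : ℝ) * ‖b - a‖ := hd
  have hL₂nn : (0:ℝ) ≤ (L₂ : ℝ) := L₂.coe_nonneg
  -- final chain
  have hfinal : g b ≤ g a + μ / 2 * t ^ 2 := by
    have h1 : g b - g a ≤ (L₂ : ℝ) * (C * t * t) := by
      refine le_trans hgdiff (mul_le_mul_of_nonneg_left ?_ hL₂nn)
      exact htaylor
    have h2 : (L₂ : ℝ) * (C * t * t) ≤ μ / 2 * t ^ 2 := by
      have hh : 0 ≤ (μ / 2 - (L₂ : ℝ) * C) * t ^ 2 :=
        mul_nonneg (by linarith) (sq_nonneg t)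
      nlinarith [hh]
    linarith
  simpa [hb, ha, ht] using hfinal
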